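/- Let X ⊂ ℝ^d be a bounded Borel set and λ : X → (0, ∞) a Lebesgue-integrable intensity function. Let (𝒯_n)_{n ∈ ℕ} be a dissecting system of finite partitions of X into rectangles: the partitions are nested (each 𝒯_{n+1} refines 𝒯_n), the σ-algebras σ(𝒯_n) increase to the Borel σ-algebra of X, and any two distinct points of X are eventually separated, i.e. lie in different bins of 𝒯_n for all large n. For each n and each bin B ∈ 𝒯_n put λ_B^{(n)} = ∫_B λ(y) dy, and for a finite configuration φ = {y₁, …, y_m} define the binned score S_bin^{𝒯_n}(φ) = Σ_{B ∈ 𝒯_n} [ −φ(B) log λ_B^{(n)} + λ_B^{(n)} ] and the correction C_n(φ) = Σ_{B ∈ 𝒯_n} 1{φ(B) > 0} · log|B|, where |B| is the Lebesgue measure of B. Then for every m ∈ ℕ₀ and Lebesgue-almost every tuple (y₁, …, y_m) ∈ X^m of distinct points, S_bin^{𝒯_n}(φ) + C_n(φ) → −Σ_{j=1}^m log λ(y_j) + ∫_X λ(y) dy as n → ∞. That is, for almost every realization of a unit-rate Poisson point process, the binned Poisson score with correction converges to the logarithmic intensity score S(Λ, φ) = −Σ_j log λ(y_j) + ∫_X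 λ. -/

import Mathlib

open MeasureTheory Filter
open scoped Classical Topology

lemma condexp_partition
    {α : Type*} {m0 : MeasurableSpace α} (μ : Measure α) [IsFiniteMeasure μ]
    (C : Finset (Set α))
    (hmeas : ∀ B ∈ C, MeasurableSet B)
    (hd : ∀ B ∈ C, ∀ B' ∈ C, B ≠ B' → Disjoint B B')
    (hcov : μ (⋃₀ (↑C : Set (Set α)))ᶜ = 0)
    (f : α → ℝ) (hf : Integrable f μ) :
    (fun x => ∑ B ∈ C, Set.indicator B
        (fun _ => (∫ z in B, f z ∂μ) / (μ B).toReal) x)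
      =ᵐ[μ] μ[f | MeasurableSpace.generateFrom (↑C : Set (Set α))] := by
  have hm : MeasurableSpace.generateFrom (↑C : Set (Set α)) ≤ m0 :=
    MeasurableSpace.generateFrom_le fun s hs => hmeas s hs
  set g : α → ℝ := fun x => ∑ B ∈ C, Set.indicator B
      (fun _ => (∫ z in B, f z ∂μ) / (μ B).toReal) x with hg_def
  have hBint : ∀ B ∈ C, Integrable
      (Set.indicator B (fun _ => (∫ z in B, f z ∂μ) / (μ B).toReal)) μ := fun B hB =>
    (integrable_indicator_iff (hmeas B hB)).mpr
      (integrableOn_const (measure_ne_top μ B))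
  have hgint : Integrable g μ := integrable_finset_sum _ hBint
  -- integral of g over a bin
  have hbin : ∀ B₀ ∈ C, ∫ x in B₀, g x ∂μ = ∫ x in B₀, f x ∂μ := by
    intro B₀ hB₀
    rw [hg_def, integral_finset_sum _ (fun B hB => (hBint B hB).integrableOn)]
    rw [Finset.sum_eq_single_of_mem B₀ hB₀]
    · rw [setIntegral_indicator (hmeas B₀ hB₀), Set.inter_self, setIntegral_const]
      rcases eq_or_ne (μ B₀) 0 with h0 | h0
      · rw [h0, setIntegral_measure_zero _ h0]; simp
      · rw [smul_eq_mul, mul_comm, measureReal_def, div_mul_cancel₀]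
        exact ENNReal.toReal_ne_zero.mpr ⟨h0, measure_ne_top μ B₀⟩
    · intro B hB hne
      rw [setIntegral_indicator (hmeas B hB),
        Set.disjoint_iff_inter_eq_empty.mp (hd B₀ hB₀ B hB (Ne.symm hne))]
      simp
  -- total integral
  have htot : ∫ x, g x ∂μ = ∫ x, f x ∂μ := by
    have hU : MeasurableSet (⋃₀ (↑C : Set (Set α))) := by
      rw [Set.sUnion_eq_biUnion]
      exact MeasurableSet.biUnion C.countable_toSet fun B hB => hmeas B hB
    have key : ∀ h : α → ℝ, Integrable h μ →
        ∫ x, h x ∂μ = ∑ B ∈ C, ∫ x in B, h x ∂μ := by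
      intro h hh
      rw [← integral_add_compl hU hh, setIntegral_measure_zero _ hcov, add_zero,
        Set.sUnion_eq_biUnion, Finset.set_biUnion_coe,
        integral_biUnion_finset C (fun B hB => hmeas B hB)
          (fun B hB B' hB' hne => hd B hB B' hB' hne) (fun B hB => hh.integrableOn)]
    rw [key g hgint, key f hf]
    exact Finset.sum_congr rfl hbin
  -- the set-integral characterization on all generated-measurable sets
  have hset : ∀ s : Set α,
      MeasurableSet[MeasurableSpace.generateFrom (↑C : Set (Set α))] s →
      ∫ x in s, g x ∂μ = ∫ x in s, f x ∂μ := by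
    intro s hs
    refine MeasurableSpace.induction_on_inter (m := MeasurableSpace.generateFrom (↑C : Set (Set α))) (C := fun s _ =>
        ∫ x in s, g x ∂μ = ∫ x in s, f x ∂μ) rfl ?_ (by simp) ?_ ?_ ?_ s hs
    · -- π-system
      rintro u hu v hv huv
      rcases eq_or_ne u v with rfl | hne
      · simpa using hu
      · exact absurd (Set.disjoint_iff_inter_eq_empty.mp (hd u hu v hv hne)) (by
          intro h; rw [h] at huv; exact Set.not_nonempty_empty huv)
    · exact fun t ht => hbin t ht
    · intro t ht hteq
      have ht' : MeasurableSet t := hm t ht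
      have h1 := integral_add_compl ht' hgint
      have h2 := integral_add_compl ht' hf
      rw [htot] at h1
      linarith [h1, h2, hteq]
    · intro u hdisjU hmeasU hUeq
      have hmeasU' : ∀ i, MeasurableSet (u i) := fun i => hm _ (hmeasU i)
      rw [integral_iUnion hmeasU' hdisjU hgint.integrableOn,
        integral_iUnion hmeasU' hdisjU hf.integrableOn]
      exact tsum_congr hUeq
  refine ae_eq_condExp_of_forall_setIntegral_eq hm hf
    (fun s _ _ => hgint.integrableOn) (fun s hs _ => hset s hs) ?_
  refine StronglyMeasurable.aestronglyMeasurable ?_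
  refine Finset.stronglyMeasurable_fun_sum _ fun B hB => ?_
  exact (stronglyMeasurable_const).indicator (MeasurableSpace.measurableSet_generateFrom hB)

lemma aux_ae
    (d : ℕ) (X : Set (Fin d → ℝ))
    (hXbdd : Bornology.IsBounded X) (hXmeas : MeasurableSet X)
    (lam : (Fin d → ℝ) → ℝ) (hlamMeas : Measurable lam)
    (hlamPos : ∀ x ∈ X, 0 < lam x) (hlamInt : IntegrableOn lam X volume)
    (𝒯 : ℕ → Finset (Set (Fin d → ℝ)))
    (hcover : ∀ n, ⋃₀ (↑(𝒯 n) : Set (Set (Fin d → ℝ))) = X)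
    (hdisj : ∀ n, ∀ B ∈ 𝒯 n, ∀ B' ∈ 𝒯 n, B ≠ B' → Disjoint B B')
    (hBsub : ∀ n, ∀ B ∈ 𝒯 n, B ⊆ X)
    (hBmeas : ∀ n, ∀ B ∈ 𝒯 n, MeasurableSet B)
    (hnest : ∀ n, ∀ B ∈ 𝒯 (n + 1), ∃ B' ∈ 𝒯 n, B ⊆ B')
    (hgen : ∀ A : Set (Fin d → ℝ), A ⊆ X → MeasurableSet A →
      MeasurableSet[⨆ n, MeasurableSpace.generateFrom
        (↑(𝒯 n) : Set (Set (Fin d → ℝ)))] A) :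
    ∀ᵐ x ∂(volume : Measure (Fin d → ℝ)), x ∈ X → Tendsto (fun n => ∑ B ∈ 𝒯 n,
        if x ∈ B then Real.log (volume B).toReal - Real.log (∫ z in B, lam z) else 0)
      atTop (𝓝 (-Real.log (lam x))) := by
  set μ : Measure (Fin d → ℝ) := volume.restrict X with hμ_def
  haveI : IsFiniteMeasure μ := ⟨by
    rw [hμ_def, Measure.restrict_apply_univ]; exact hXbdd.measure_lt_top⟩
  -- basic conversions
  have hμB : ∀ n, ∀ B ∈ 𝒯 n, μ B = volume B := by
    intro n B hB
    rw [hμ_def, Measure.restrict_apply (hBmeas n B hB),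
      Set.inter_eq_self_of_subset_left (hBsub n B hB)]
  have hres : ∀ n, ∀ B ∈ 𝒯 n, μ.restrict B = volume.restrict B := by
    intro n B hB
    rw [hμ_def, Measure.restrict_restrict (hBmeas n B hB),
      Set.inter_eq_self_of_subset_left (hBsub n B hB)]
  set g : (Fin d → ℝ) → ℝ := X.indicator lam with hg_def
  have hintB : ∀ n, ∀ B ∈ 𝒯 n, ∫ z in B, g z ∂μ = ∫ z in B, lam z := by
    intro n B hB
    rw [hres n B hB]
    refine setIntegral_congr_fun (hBmeas n B hB) fun z hz => ?_
    exact Set.indicator_of_mem (hBsub n B hB hz) lam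
  -- the filtration
  have hmono : ∀ n, MeasurableSpace.generateFrom (↑(𝒯 n) : Set (Set (Fin d → ℝ)))
      ≤ MeasurableSpace.generateFrom (↑(𝒯 (n+1)) : Set (Set (Fin d → ℝ))) := by
    intro n
    refine MeasurableSpace.generateFrom_le fun B hB => ?_
    have hBeq : B = ⋃ B' ∈ (𝒯 (n+1)).filter (fun B' => B' ⊆ B), B' := by
      apply Set.Subset.antisymm
      · intro x hx
        have hxX : x ∈ X := hBsub n B hB hx
        rw [← hcover (n+1)] at hxX
        obtain ⟨B', hB', hxB'⟩ := hxX
        obtain ⟨B'', hB'', hB'sub⟩ := hnest n B' hB'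
        have : B'' = B := by
          by_contra hne
          exact Set.disjoint_left.mp (hdisj n B'' hB'' B hB hne) (hB'sub hxB') hx
        subst this
        exact Set.mem_biUnion (Finset.mem_filter.mpr ⟨hB', hB'sub⟩) hxB'
      · intro x hx
        obtain ⟨B', hB', hxB'⟩ := Set.mem_iUnion₂.mp hx
        exact (Finset.mem_filter.mp hB').2 hxB'
    rw [hBeq]
    exact MeasurableSet.biUnion ((𝒯 (n+1)).filter _).countable_toSet
      fun B' hB' => MeasurableSpace.measurableSet_generateFrom
        ((Finset.mem_filter.mp (Finset.mem_coe.mp hB')).1)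
  set ℱ : Filtration ℕ (by infer_instance : MeasurableSpace (Fin d → ℝ)) :=
    ⟨fun n => MeasurableSpace.generateFrom (↑(𝒯 n) : Set (Set (Fin d → ℝ))),
     monotone_nat_of_le_succ hmono,
     fun n => MeasurableSpace.generateFrom_le fun B hB => hBmeas n B hB⟩ with hℱ_def
  -- g is measurable wrt the supremum σ-algebra
  have hXm : MeasurableSet[⨆ n, ℱ n] X := hgen X subset_rfl hXmeas
  have hgmeas : StronglyMeasurable[⨆ n, ℱ n] g := by
    refine Measurable.stronglyMeasurable ?_
    intro s hs
    have h1 : MeasurableSet[⨆ n, ℱ n] (X ∩ lam ⁻¹' s) :=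
      hgen _ Set.inter_subset_left (hXmeas.inter (hlamMeas hs))
    by_cases h0 : (0:ℝ) ∈ s
    · have : g ⁻¹' s = (X ∩ lam ⁻¹' s) ∪ Xᶜ := by
        ext x
        by_cases hx : x ∈ X <;> simp [hg_def, Set.indicator_apply, hx, h0]
      rw [this]; exact h1.union hXm.compl
    · have : g ⁻¹' s = X ∩ lam ⁻¹' s := by
        ext x
        by_cases hx : x ∈ X <;> simp [hg_def, Set.indicator_apply, hx, h0]
      rw [this]; exact h1
  have hgint : Integrable g μ := by
    rw [hg_def, hμ_def]
    refine (integrable_indicator_iff hXmeas).mpr ?_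
    rw [IntegrableOn, Measure.restrict_restrict hXmeas, Set.inter_self]
    exact hlamInt
  -- martingale convergence
  have hconv := hgint.tendsto_ae_condExp hgmeas
  -- identify the conditional expectations
  have hid : ∀ n, (fun x => ∑ B ∈ 𝒯 n, Set.indicator B
      (fun _ => (∫ z in B, lam z) / (volume B).toReal) x) =ᵐ[μ] μ[g | ℱ n] := by
    intro n
    have hcov' : μ (⋃₀ (↑(𝒯 n) : Set (Set (Fin d → ℝ))))ᶜ = 0 := by
      rw [hcover n, hμ_def, Measure.restrict_apply hXmeas.compl]
      simp
    have := condexp_partition μ (𝒯 n) (hBmeas n) (hdisj n) hcov' g hgint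
    refine Filter.EventuallyEq.trans (Filter.EventuallyEq.of_eq ?_) this
    funext x
    refine Finset.sum_congr rfl fun B hB => ?_
    rw [hintB n B hB, hμB n B hB]
  -- the set of points in some null bin
  have hN : volume (⋃ n, ⋃ B ∈ (𝒯 n).filter (fun B => volume B = 0), B) = 0 := by
    refine measure_iUnion_null fun n => ?_
    refine (measure_biUnion_null_iff ((𝒯 n).filter _).countable_toSet).mpr fun B hB => ?_
    exact (Finset.mem_filter.mp (Finset.mem_coe.mp hB)).2
  -- combine the a.e. statements
  have hae : ∀ᵐ x ∂μ, Tendsto (fun n => ∑ B ∈ 𝒯 n, Set.indicator B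
      (fun _ => (∫ z in B, lam z) / (volume B).toReal) x) atTop (𝓝 (g x)) := by
    have hall : ∀ᵐ x ∂μ, ∀ n, (fun x => ∑ B ∈ 𝒯 n, Set.indicator B
        (fun _ => (∫ z in B, lam z) / (volume B).toReal) x) x = (μ[g | ℱ n]) x :=
      ae_all_iff.mpr fun n => hid n
    filter_upwards [hconv, hall] with x hx hxid
    simpa only [hxid] using hx
  have haeX : ∀ᵐ x ∂μ, x ∈ X := ae_restrict_mem hXmeas
  have haeN : ∀ᵐ x ∂μ, x ∉ ⋃ n, ⋃ B ∈ (𝒯 n).filter (fun B => volume B = 0), B := by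
    have hμN : μ (⋃ n, ⋃ B ∈ (𝒯 n).filter (fun B => volume B = 0), B) = 0 :=
      le_antisymm (by rw [hμ_def]; exact (Measure.restrict_apply_le _ _).trans hN.le) zero_le
    exact compl_mem_ae_iff.mpr hμN
  have key : ∀ᵐ x ∂μ, Tendsto (fun n => ∑ B ∈ 𝒯 n,
      if x ∈ B then Real.log (volume B).toReal - Real.log (∫ z in B, lam z) else 0)
      atTop (𝓝 (-Real.log (lam x))) := by
    filter_upwards [hae, haeX, haeN] with x hx hxX hxN
    have hgx : g x = lam x := Set.indicator_of_mem hxX lam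
    rw [hgx] at hx
    have hlamx : 0 < lam x := hlamPos x hxX
    -- for each n, the bin containing x
    have hbin : ∀ n, ∃ B₀ ∈ 𝒯 n, x ∈ B₀ ∧ volume B₀ ≠ 0 ∧
        (∑ B ∈ 𝒯 n, Set.indicator B
          (fun _ => (∫ z in B, lam z) / (volume B).toReal) x)
          = (∫ z in B₀, lam z) / (volume B₀).toReal ∧
        (∑ B ∈ 𝒯 n, if x ∈ B then
            Real.log (volume B).toReal - Real.log (∫ z in B, lam z) else 0)
          = Real.log (volume B₀).toReal - Real.log (∫ z in B₀, lam z) := by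
      intro n
      have hxX' : x ∈ ⋃₀ (↑(𝒯 n) : Set (Set (Fin d → ℝ))) := by rw [hcover n]; exact hxX
      obtain ⟨B₀, hB₀, hxB₀⟩ := hxX'
      have hB₀' : B₀ ∈ 𝒯 n := hB₀
      refine ⟨B₀, hB₀', hxB₀, ?_, ?_, ?_⟩
      · intro h0
        exact hxN (Set.mem_iUnion.mpr ⟨n, Set.mem_biUnion
          (Finset.mem_coe.mpr (Finset.mem_filter.mpr ⟨hB₀', h0⟩)) hxB₀⟩)
      · rw [Finset.sum_eq_single_of_mem B₀ hB₀']
        · exact Set.indicator_of_mem hxB₀ _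
        · intro B hB hne
          refine Set.indicator_of_notMem (fun hxB => ?_) _
          exact Set.disjoint_left.mp (hdisj n B hB B₀ hB₀' hne) hxB hxB₀
      · rw [Finset.sum_eq_single_of_mem B₀ hB₀']
        · rw [if_pos hxB₀]
        · intro B hB hne
          rw [if_neg]
          intro hxB
          exact Set.disjoint_left.mp (hdisj n B hB B₀ hB₀' hne) hxB hxB₀
    -- eventual positivity
    have hev : ∀ᶠ n in atTop, 0 < (∑ B ∈ 𝒯 n, Set.indicator B
        (fun _ => (∫ z in B, lam z) / (volume B).toReal) x) :=
      hx.eventually (eventually_gt_nhds hlamx)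
    have heq : (fun n => ∑ B ∈ 𝒯 n,
        if x ∈ B then Real.log (volume B).toReal - Real.log (∫ z in B, lam z) else 0)
        =ᶠ[atTop] fun n => -(Real.log (∑ B ∈ 𝒯 n, Set.indicator B
          (fun _ => (∫ z in B, lam z) / (volume B).toReal) x)) := by
      filter_upwards [hev] with n hn
      obtain ⟨B₀, hB₀, hxB₀, hvol0, hGeq, hSeq⟩ := hbin n
      rw [hGeq] at hn
      rw [hSeq, hGeq]
      have hvolne : (volume B₀).toReal ≠ 0 := ENNReal.toReal_ne_zero.mpr
        ⟨hvol0, ne_top_of_lt (lt_of_le_of_lt (measure_mono (hBsub n B₀ hB₀))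
          hXbdd.measure_lt_top)⟩
      have hvolpos : 0 < (volume B₀).toReal := lt_of_le_of_ne ENNReal.toReal_nonneg
        (Ne.symm hvolne)
      have hnum : 0 < ∫ z in B₀, lam z := by
        by_contra hle
        push_neg at hle
        have : (∫ z in B₀, lam z) / (volume B₀).toReal ≤ 0 :=
          div_nonpos_of_nonpos_of_nonneg hle ENNReal.toReal_nonneg
        linarith
      rw [Real.log_div (ne_of_gt hnum) hvolne]
      ring
    refine Tendsto.congr' heq.symm ?_
    have := ((Real.continuousAt_log (ne_of_gt hlamx)).tendsto.comp hx).neg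
    exact this
  rw [hμ_def] at key
  exact ae_imp_of_ae_restrict key


/-- **Convergence of the binned Poisson score to the logarithmic intensity
score.** For a dissecting system `(𝒯 n)` of nested finite partitions of a
bounded Borel set `X ⊆ ℝ^d` into rectangles, whose σ-algebras increase to the
Borel σ-algebra of `X` and which asymptotically separates points, the binned
score `Σ_B [-φ(B) log ∫_B λ + ∫_B λ]` plus the correction
`Σ_B 1{φ(B) > 0} log|B|` converges, for every `m` and almost every tuple of
`m` distinct points of `X`, to `-Σ_j log λ(y_j) + ∫_X λ`. -/
theorem binned_score_tendsto_log_score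
    (d : ℕ) (X : Set (Fin d → ℝ))
    (hXbdd : Bornology.IsBounded X) (hXmeas : MeasurableSet X)
    (lam : (Fin d → ℝ) → ℝ) (hlamMeas : Measurable lam)
    (hlamPos : ∀ x ∈ X, 0 < lam x) (hlamInt : IntegrableOn lam X volume)
    (𝒯 : ℕ → Finset (Set (Fin d → ℝ)))
    -- each `𝒯 n` is a partition of `X` ...
    (hcover : ∀ n, ⋃₀ (↑(𝒯 n) : Set (Set (Fin d → ℝ))) = X)
    (hdisj : ∀ n, ∀ B ∈ 𝒯 n, ∀ B' ∈ 𝒯 n, B ≠ B' → Disjoint B B')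
    -- ... into rectangles
    (hrect : ∀ n, ∀ B ∈ 𝒯 n, ∃ a b : Fin d → ℝ,
      B = X ∩ Set.univ.pi fun i => Set.Ico (a i) (b i))
    -- the partitions are nested
    (hnest : ∀ n, ∀ B ∈ 𝒯 (n + 1), ∃ B' ∈ 𝒯 n, B ⊆ B')
    -- the σ-algebras `σ(𝒯 n)` increase to the Borel σ-algebra of `X`
    (hgen : ∀ A : Set (Fin d → ℝ), A ⊆ X → MeasurableSet A →
      MeasurableSet[⨆ n, MeasurableSpace.generateFrom
        (↑(𝒯 n) : Set (Set (Fin d → ℝ)))] A)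
    -- every pair of distinct points of `X` is eventually separated
    (hsep : ∀ x ∈ X, ∀ y ∈ X, x ≠ y → ∃ n₀, ∀ n ≥ n₀, ∀ B ∈ 𝒯 n,
      ¬(x ∈ B ∧ y ∈ B)) :
    ∀ m : ℕ, ∀ᵐ y ∂(Measure.pi fun _ : Fin m => (volume : Measure (Fin d → ℝ))),
      ((∀ j, y j ∈ X) ∧ Function.Injective y) →
      Tendsto (fun n =>
          (∑ B ∈ 𝒯 n, (-(∑ j : Fin m, if y j ∈ B then (1:ℝ) else 0) *
              Real.log (∫ x in B, lam x) + ∫ x in B, lam x)) +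
          ∑ B ∈ 𝒯 n, (if ∃ j : Fin m, y j ∈ B then
              Real.log (volume B).toReal else 0))
        atTop
        (𝓝 (-(∑ j : Fin m, Real.log (lam (y j))) + ∫ x in X, lam x)) := by

  have hBsub : ∀ n, ∀ B ∈ 𝒯 n, B ⊆ X := by
    intro n B hB
    obtain ⟨a, b, rfl⟩ := hrect n B hB
    exact Set.inter_subset_left
  have hBmeas : ∀ n, ∀ B ∈ 𝒯 n, MeasurableSet B := by
    intro n B hB
    obtain ⟨a, b, rfl⟩ := hrect n B hB
    exact hXmeas.inter (MeasurableSet.univ_pi fun i => measurableSet_Ico)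
  have hP := aux_ae d X hXbdd hXmeas lam hlamMeas hlamPos hlamInt 𝒯 hcover hdisj
    hBsub hBmeas hnest hgen
  intro m
  -- the exceptional set
  set E : Set (Fin d → ℝ) := {x | ¬ (x ∈ X → Tendsto (fun n => ∑ B ∈ 𝒯 n,
      if x ∈ B then Real.log (volume B).toReal - Real.log (∫ z in B, lam z) else 0)
      atTop (𝓝 (-Real.log (lam x))))} with hE_def
  have hE : volume E = 0 := ae_iff.mp hP
  obtain ⟨E', hEE', hE'meas, hE'null⟩ := exists_measurable_superset_of_null hE
  have hgood : ∀ᵐ y ∂(Measure.pi fun _ : Fin m => (volume : Measure (Fin d → ℝ))),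
      ∀ j, y j ∉ E' := by
    rw [ae_all_iff]
    intro j
    rw [ae_iff]
    have heq : {y : Fin m → Fin d → ℝ | ¬ y j ∉ E'}
        = Set.pi Set.univ (Function.update (fun _ : Fin m => (Set.univ : Set (Fin d → ℝ))) j E') := by
      ext z
      simp only [Set.mem_setOf_eq, not_not, Set.mem_pi, Set.mem_univ, forall_true_left]
      constructor
      · intro hz i
        rcases eq_or_ne i j with rfl | hij
        · simpa using hz
        · simp [Function.update_of_ne hij]
      · intro hz
        have := hz j
        simpa using this
    rw [heq, Measure.pi_pi]
    exact Finset.prod_eq_zero (Finset.mem_univ j) (by simp [hE'null])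
  filter_upwards [hgood] with y hy
  rintro ⟨hyX, hyinj⟩
  -- each coordinate satisfies the pointwise convergence
  have hSj : ∀ j : Fin m, Tendsto (fun n => ∑ B ∈ 𝒯 n,
      if y j ∈ B then Real.log (volume B).toReal - Real.log (∫ z in B, lam z) else 0)
      atTop (𝓝 (-Real.log (lam (y j)))) := by
    intro j
    have hnE : y j ∉ E := fun h => hy j (hEE' h)
    rw [hE_def] at hnE
    simp only [Set.mem_setOf_eq, not_not] at hnE
    exact hnE (hyX j)
  -- eventual separation of all points
  have hpair : ∀ j k : Fin m, j ≠ k → ∃ n₀, ∀ n ≥ n₀, ∀ B ∈ 𝒯 n,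
      ¬(y j ∈ B ∧ y k ∈ B) :=
    fun j k hjk => hsep (y j) (hyX j) (y k) (hyX k) (fun h => hjk (hyinj h))
  choose! n₀ hn₀ using hpair
  set N : ℕ := Finset.sup (Finset.univ ×ˢ Finset.univ) (fun p : Fin m × Fin m => n₀ p.1 p.2)
    with hN_def
  have hsepN : ∀ n ≥ N, ∀ B ∈ 𝒯 n, ∀ j k : Fin m, j ≠ k → ¬(y j ∈ B ∧ y k ∈ B) := by
    intro n hn B hB j k hjk
    have hle : n₀ j k ≤ N := by
      rw [hN_def]
      exact Finset.le_sup (f := fun p : Fin m × Fin m => n₀ p.1 p.2) (b := (j, k))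
        (Finset.mem_product.mpr ⟨Finset.mem_univ _, Finset.mem_univ _⟩)
    exact hn₀ j k hjk n (le_trans hle hn) B hB
  -- the algebraic identity for n ≥ N
  have hsum_int : ∀ n, ∑ B ∈ 𝒯 n, ∫ x in B, lam x = ∫ x in X, lam x := by
    intro n
    rw [← integral_biUnion_finset (𝒯 n) (fun B hB => hBmeas n B hB)
      (fun B hB B' hB' h => hdisj n B hB B' hB' h)
      (fun B hB => hlamInt.mono_set (hBsub n B hB))]
    congr 1
    rw [← Finset.set_biUnion_coe, ← Set.sUnion_eq_biUnion, hcover n]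
  have hExpr : ∀ n ≥ N,
      (∑ B ∈ 𝒯 n, (-(∑ j : Fin m, if y j ∈ B then (1:ℝ) else 0) *
          Real.log (∫ x in B, lam x) + ∫ x in B, lam x)) +
        ∑ B ∈ 𝒯 n, (if ∃ j : Fin m, y j ∈ B then Real.log (volume B).toReal else 0)
      = (∫ x in X, lam x) + ∑ j : Fin m, (∑ B ∈ 𝒯 n,
          if y j ∈ B then Real.log (volume B).toReal - Real.log (∫ z in B, lam z) else 0) := by
    intro n hn
    have hone : ∀ B ∈ 𝒯 n,
        (-(∑ j : Fin m, if y j ∈ B then (1:ℝ) else 0) * Real.log (∫ x in B, lam x)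
          + (if ∃ j : Fin m, y j ∈ B then Real.log (volume B).toReal else 0))
        = ∑ j : Fin m, (if y j ∈ B then
            Real.log (volume B).toReal - Real.log (∫ z in B, lam z) else 0) := by
      intro B hB
      by_cases hex : ∃ j : Fin m, y j ∈ B
      · obtain ⟨j₀, hj₀⟩ := hex
        have huniq : ∀ k : Fin m, k ≠ j₀ → y k ∉ B := fun k hk hkB =>
          hsepN n hn B hB k j₀ hk ⟨hkB, hj₀⟩
        rw [Finset.sum_eq_single j₀ (fun k _ hk => by rw [if_neg (huniq k hk)])
            (fun h => absurd (Finset.mem_univ j₀) h),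
          Finset.sum_eq_single j₀ (fun k _ hk => by rw [if_neg (huniq k hk)])
            (fun h => absurd (Finset.mem_univ j₀) h),
          if_pos hj₀, if_pos hj₀, if_pos ⟨j₀, hj₀⟩]
        ring
      · push_neg at hex
        rw [if_neg (by exact fun ⟨j, hj⟩ => hex j hj),
          Finset.sum_eq_zero (fun j _ => if_neg (hex j)),
          Finset.sum_eq_zero (fun j _ => if_neg (hex j))]
        ring
    calc (∑ B ∈ 𝒯 n, (-(∑ j : Fin m, if y j ∈ B then (1:ℝ) else 0) *
            Real.log (∫ x in B, lam x) + ∫ x in B, lam x)) +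
          ∑ B ∈ 𝒯 n, (if ∃ j : Fin m, y j ∈ B then Real.log (volume B).toReal else 0)
        = (∑ B ∈ 𝒯 n, (-(∑ j : Fin m, if y j ∈ B then (1:ℝ) else 0) *
            Real.log (∫ x in B, lam x) +
            (if ∃ j : Fin m, y j ∈ B then Real.log (volume B).toReal else 0))) +
          ∑ B ∈ 𝒯 n, ∫ x in B, lam x := by
          rw [Finset.sum_add_distrib, Finset.sum_add_distrib]
          ring
      _ = (∑ B ∈ 𝒯 n, ∑ j : Fin m, (if y j ∈ B then
            Real.log (volume B).toReal - Real.log (∫ z in B, lam z) else 0)) +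
          ∫ x in X, lam x := by
          rw [hsum_int n, Finset.sum_congr rfl hone]
      _ = (∫ x in X, lam x) + ∑ j : Fin m, (∑ B ∈ 𝒯 n,
            if y j ∈ B then Real.log (volume B).toReal - Real.log (∫ z in B, lam z) else 0) := by
          rw [Finset.sum_comm]
          ring
  -- conclude
  have htend : Tendsto (fun n => (∫ x in X, lam x) + ∑ j : Fin m, (∑ B ∈ 𝒯 n,
      if y j ∈ B then Real.log (volume B).toReal - Real.log (∫ z in B, lam z) else 0))
      atTop (𝓝 ((∫ x in X, lam x) + ∑ j : Fin m, -Real.log (lam (y j)))) :=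
    tendsto_const_nhds.add (tendsto_finset_sum _ fun j _ => hSj j)
  have hlim : (∫ x in X, lam x) + ∑ j : Fin m, -Real.log (lam (y j))
      = -(∑ j : Fin m, Real.log (lam (y j))) + ∫ x in X, lam x := by
    rw [Finset.sum_neg_distrib, add_comm]
  rw [← hlim]
  refine Tendsto.congr' ?_ htend
  filter_upwards [eventually_ge_atTop N] with n hn
  exact (hExpr n hn).symm
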